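/- For all integers 0 ≤ k ≤ n, the number of Dyck words of semi-length n+1 having exactly k up-steps not at ground level equals C_{n,k}. -/
import Mathlib

/-- Catalan's triangle: `C_{n,k} = ((n-k+1)/(n+1)) * binom(n+k, n)` (the division is exact). -/
def catalanTriangle (n k : ℕ) : ℕ := (n - k + 1) * (n + k).choose n / (n + 1)

/-- A Dyck word of semi-length `m`: a word in `U = true` and `D = false` of length `2m` with
`m` `U`'s and `m` `D`'s such that every prefix has at least as many `U`'s as `D`'s. -/
def IsDyckWord (m : ℕ) (w : List Bool) : Prop :=
  w.length = 2 * m ∧ w.count true = m ∧ w.count false = m ∧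
    ∀ i, (w.take i).count false ≤ (w.take i).count true

/-- The positions of the up-steps of `w` that are not at ground level, i.e. positions `i`
carrying a `U` such that the prefix strictly before position `i` does not have equally many
`U`'s and `D`'s. -/
def upStepsNotAtGround (w : List Bool) : Finset ℕ :=
  (Finset.range w.length).filter fun i =>
    w.getD i false = true ∧ (w.take i).count true ≠ (w.take i).count false

namespace CDW

/-- prefix condition -/
def Ok (w : List Bool) : Prop := ∀ i, (w.take i).count false ≤ (w.take i).count true

/-- statistic: number of up-steps not at ground level -/
def stat (w : List Bool) : ℕ := (upStepsNotAtGround w).card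

def S (u d k : ℕ) : Set (List Bool) :=
  {w | w.count true = u ∧ w.count false = d ∧ Ok w ∧ stat w = k}

lemma count_add_count (w : List Bool) : w.count true + w.count false = w.length := by
  induction w with
  | nil => simp
  | cons b t ih => cases b <;> simp [List.count_cons] <;> omega

lemma ok_concat (t : List Bool) (b : Bool) :
    Ok (t ++ [b]) ↔ Ok t ∧ (t ++ [b]).count false ≤ (t ++ [b]).count true := by
  constructor
  · intro h
    refine ⟨fun i => ?_, ?_⟩
    · rcases le_or_gt i t.length with hi | hi
      · have := h i
        rwa [List.take_append_of_le_length hi] at this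
      · have h2 := h t.length
        rw [List.take_append_of_le_length le_rfl, List.take_length] at h2
        rw [List.take_of_length_le hi.le]
        exact h2
    · have := h (t.length + 1)
      rwa [List.take_of_length_le (by simp)] at this
  · rintro ⟨h1, h2⟩ i
    rcases le_or_gt i t.length with hi | hi
    · rw [List.take_append_of_le_length hi]
      exact h1 i
    · rw [List.take_of_length_le (by simp; omega)]
      exact h2

lemma stat_concat (t : List Bool) (b : Bool) :
    stat (t ++ [b]) = stat t +
      (if b = true ∧ t.count true ≠ t.count false then 1 else 0) := by
  classical
  unfold stat upStepsNotAtGround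
  have hlen : (t ++ [b]).length = t.length + 1 := by simp
  rw [hlen, Finset.range_add_one, Finset.filter_insert]
  have hagree : Finset.filter (fun i =>
      (t ++ [b]).getD i false = true ∧
        ((t ++ [b]).take i).count true ≠ ((t ++ [b]).take i).count false)
      (Finset.range t.length) =
      Finset.filter (fun i =>
        t.getD i false = true ∧ (t.take i).count true ≠ (t.take i).count false)
      (Finset.range t.length) := by
    apply Finset.filter_congr
    intro i hi
    rw [Finset.mem_range] at hi
    rw [List.getD_append _ _ _ _ hi, List.take_append_of_le_length hi.le]
  have hnot : t.length ∉ Finset.filter (fun i =>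
        t.getD i false = true ∧ (t.take i).count true ≠ (t.take i).count false)
      (Finset.range t.length) := by
    simp
  have hpost : ((t ++ [b]).getD t.length false = true ∧
      ((t ++ [b]).take t.length).count true ≠ ((t ++ [b]).take t.length).count false)
      ↔ (b = true ∧ t.count true ≠ t.count false) := by
    rw [List.take_left]
    have : (t ++ [b]).getD t.length false = b := by
      simp [List.getD, List.getElem?_concat_length]
    rw [this]
  rw [hagree]
  by_cases h : b = true ∧ t.count true ≠ t.count false
  · rw [if_pos (hpost.mpr h), if_pos h, Finset.card_insert_of_notMem hnot]
  · rw [if_neg (fun hc => h (hpost.mp hc)), if_neg h]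
    simp

lemma mem_S_concat_true (t : List Bool) (u d k : ℕ) :
    (t ++ [true]) ∈ S u d k ↔
      (t.count true + 1 = u ∧ t.count false = d ∧ Ok t ∧
        stat t + (if t.count true ≠ t.count false then 1 else 0) = k) := by
  simp only [S, Set.mem_setOf_eq, stat_concat, ok_concat]
  constructor
  · rintro ⟨h1, h2, ⟨h3, _⟩, h4⟩
    simp_all [List.count_append]
  · rintro ⟨h1, h2, h3, h4⟩
    have hle := h3 t.length
    rw [List.take_length] at hle
    refine ⟨?_, ?_, ⟨h3, ?_⟩, ?_⟩ <;> simp_all [List.count_append] <;> omega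

lemma mem_S_concat_false (t : List Bool) (u d k : ℕ) :
    (t ++ [false]) ∈ S u d k ↔
      (t.count true = u ∧ t.count false + 1 = d ∧ Ok t ∧
        t.count false + 1 ≤ t.count true ∧ stat t = k) := by
  simp only [S, Set.mem_setOf_eq, stat_concat, ok_concat]
  constructor
  · rintro ⟨h1, h2, ⟨h3, h5⟩, h4⟩
    simp_all [List.count_append]
  · rintro ⟨h1, h2, h3, h5, h4⟩
    refine ⟨?_, ?_, ⟨h3, ?_⟩, ?_⟩ <;> simp_all [List.count_append]

lemma S_finite (u d k : ℕ) : (S u d k).Finite := by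
  apply Set.Finite.subset (List.finite_length_eq Bool (u + d))
  intro w hw
  obtain ⟨h1, h2, _, _⟩ := hw
  simp only [Set.mem_setOf_eq, ← h1, ← h2, count_add_count]

lemma S_empty_of_lt (u d k : ℕ) (h : u < d) : S u d k = ∅ := by
  ext w
  simp only [S, Set.mem_setOf_eq, Set.mem_empty_iff_false, iff_false]
  rintro ⟨h1, h2, h3, _⟩
  have := h3 w.length
  rw [List.take_length] at this
  omega

lemma S_decomp (u d k : ℕ) (h : 1 ≤ u + d) :
    (S u d k).ncard =
      {t : List Bool | t ++ [true] ∈ S u d k}.ncard +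
      {t : List Bool | t ++ [false] ∈ S u d k}.ncard := by
  have hfin : ∀ b : Bool, {t : List Bool | t ++ [b] ∈ S u d k}.Finite := by
    intro b
    apply Set.Finite.subset (List.finite_length_eq Bool (u + d - 1))
    intro t ht
    simp only [Set.mem_setOf_eq] at ht ⊢
    obtain ⟨h1, h2, -, -⟩ := ht
    have h3 := count_add_count (t ++ [b])
    have h4 := count_add_count t
    have h5 : (t ++ [b]).length = t.length + 1 := by simp
    omega
  have hdecomp : S u d k =
      ((fun t => t ++ [true]) '' {t | t ++ [true] ∈ S u d k}) ∪
      ((fun t => t ++ [false]) '' {t | t ++ [false] ∈ S u d k}) := by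
    ext w
    constructor
    · intro hw
      rcases List.eq_nil_or_concat w with rfl | ⟨t, b, rfl⟩
      · obtain ⟨h1, h2, -, -⟩ := hw
        simp only [List.count_nil] at h1 h2
        omega
      · rw [List.concat_eq_append] at hw ⊢
        cases b
        · exact Or.inr ⟨t, hw, rfl⟩
        · exact Or.inl ⟨t, hw, rfl⟩
    · rintro (⟨t, ht, rfl⟩ | ⟨t, ht, rfl⟩) <;> exact ht
  conv_lhs => rw [hdecomp]
  rw [Set.ncard_union_eq ?disj ((hfin true).image _) ((hfin false).image _),
    Set.ncard_image_of_injective _ (List.append_left_injective _),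
    Set.ncard_image_of_injective _ (List.append_left_injective _)]
  case disj =>
    rw [Set.disjoint_left]
    rintro w ⟨t, -, rfl⟩ ⟨t', -, hc⟩
    have := congrArg (fun l => l.getLast?) hc
    simp at this

lemma S_nil (k : ℕ) : (S 0 0 k).ncard = if k = 0 then 1 else 0 := by
  rcases Nat.eq_zero_or_pos k with rfl | hk
  · have : S 0 0 0 = {([] : List Bool)} := by
      ext w
      simp only [S, Set.mem_setOf_eq, Set.mem_singleton_iff]
      constructor
      · rintro ⟨h1, h2, -, -⟩
        have := count_add_count w
        rw [h1, h2] at this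
        exact List.length_eq_zero_iff.mp this.symm
      · rintro rfl
        exact ⟨rfl, rfl, fun i => by simp, by simp [stat, upStepsNotAtGround]⟩
    rw [this, Set.ncard_singleton, if_pos rfl]
  · rw [if_neg (by omega)]
    have : S 0 0 k = ∅ := by
      ext w
      simp only [S, Set.mem_setOf_eq, Set.mem_empty_iff_false, iff_false]
      rintro ⟨h1, h2, -, h4⟩
      have := count_add_count w
      rw [h1, h2] at this
      obtain rfl := List.length_eq_zero_iff.mp this.symm
      simp [stat, upStepsNotAtGround] at h4
      omega
    rw [this, Set.ncard_empty]

lemma St_eq (u d k : ℕ) :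
    {t : List Bool | t ++ [true] ∈ S (u+1) d k} =
      if u = d then S u d k
      else match k with
        | 0 => (∅ : Set (List Bool))
        | k'+1 => S u d k' := by
  split_ifs with hud
  · subst hud
    ext t
    simp only [Set.mem_setOf_eq, mem_S_concat_true]
    simp only [S, Set.mem_setOf_eq]
    constructor
    · rintro ⟨h1, h2, h3, h4⟩
      rw [if_neg (by omega)] at h4
      exact ⟨by omega, h2, h3, by omega⟩
    · rintro ⟨h1, h2, h3, h4⟩
      exact ⟨by omega, h2, h3, by rw [if_neg (by omega)]; omega⟩
  · match k with
    | 0 =>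
      ext t
      simp only [Set.mem_setOf_eq, mem_S_concat_true, Set.mem_empty_iff_false, iff_false]
      rintro ⟨h1, h2, h3, h4⟩
      rw [if_pos (by omega)] at h4
      omega
    | k'+1 =>
      ext t
      simp only [Set.mem_setOf_eq, mem_S_concat_true]
      simp only [S, Set.mem_setOf_eq]
      constructor
      · rintro ⟨h1, h2, h3, h4⟩
        rw [if_pos (by omega)] at h4
        exact ⟨by omega, h2, h3, by omega⟩
      · rintro ⟨h1, h2, h3, h4⟩
        exact ⟨by omega, h2, h3, by rw [if_pos (by omega)]; omega⟩

lemma Sf_eq (u d k : ℕ) :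
    {t : List Bool | t ++ [false] ∈ S u (d+1) k} =
      if d + 1 ≤ u then S u d k else (∅ : Set (List Bool)) := by
  split_ifs with hdu
  · ext t
    simp only [Set.mem_setOf_eq, mem_S_concat_false]
    simp only [S, Set.mem_setOf_eq]
    constructor
    · rintro ⟨h1, h2, h3, h4, h5⟩
      exact ⟨h1, by omega, h3, h5⟩
    · rintro ⟨h1, h2, h3, h5⟩
      exact ⟨h1, by omega, h3, by omega, h5⟩
  · ext t
    simp only [Set.mem_setOf_eq, mem_S_concat_false, Set.mem_empty_iff_false, iff_false]
    rintro ⟨h1, h2, h3, h4, h5⟩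
    omega

lemma Sf_zero (u k : ℕ) : {t : List Bool | t ++ [false] ∈ S u 0 k} = ∅ := by
  ext t
  simp only [Set.mem_setOf_eq, mem_S_concat_false, Set.mem_empty_iff_false, iff_false]
  rintro ⟨h1, h2, -, -⟩
  omega

/-- the recurrence -/
def F : ℕ → ℕ → ℕ → ℕ
  | 0, 0, 0 => 1
  | 0, 0, _+1 => 0
  | 0, _+1, _ => 0
  | u+1, d, k =>
      (if u = d then F u d k
       else match k with
         | 0 => 0
         | k'+1 => F u d k')
      + (match d with
         | 0 => 0
         | d'+1 => if d' + 1 ≤ u + 1 then F (u+1) d' k else 0)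
  termination_by u d k => (u, d)

lemma F_zero_zero (k : ℕ) : F 0 0 k = if k = 0 then 1 else 0 := by
  match k with
  | 0 => simp [F]
  | k+1 => simp [F]

lemma F_zero_succ (d k : ℕ) : F 0 (d+1) k = 0 := by simp [F]

lemma F_succ_zero (u k : ℕ) : F (u+1) 0 k =
    (if u = 0 then F u 0 k
     else match k with
       | 0 => 0
       | k'+1 => F u 0 k') := by rw [F.eq_def]; rfl

lemma F_succ_succ (u d k : ℕ) : F (u+1) (d+1) k =
    (if u = d+1 then F u (d+1) k
     else match k with
       | 0 => 0
       | k'+1 => F u (d+1) k')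
    + (if d + 1 ≤ u + 1 then F (u+1) d k else 0) := by rw [F.eq_def]

lemma cnt_eq_F : ∀ u d k : ℕ, (S u d k).ncard = F u d k := by
  have key : ∀ N u d k : ℕ, u + d = N → (S u d k).ncard = F u d k := by
    intro N
    induction N using Nat.strong_induction_on with
    | _ N ih =>
      intro u d k hN
      cases u with
      | zero =>
        cases d with
        | zero => rw [S_nil, F_zero_zero]
        | succ d =>
          rw [S_empty_of_lt 0 (d+1) k (by omega), Set.ncard_empty, F_zero_succ]
      | succ u =>
        cases d with
        | zero =>
          rw [S_decomp (u+1) 0 k (by omega), St_eq, Sf_zero, Set.ncard_empty,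
            F_succ_zero]
          rw [Nat.add_zero]
          split_ifs with hud
          · exact ih (u + 0) (by omega) u 0 k rfl
          · cases k with
            | zero => exact Set.ncard_empty _
            | succ k' => exact ih (u + 0) (by omega) u 0 k' rfl
        | succ d =>
          rw [S_decomp (u+1) (d+1) k (by omega), St_eq, Sf_eq, F_succ_succ]
          congr 1
          · split_ifs with hud
            · exact ih (u + (d+1)) (by omega) u (d+1) k rfl
            · cases k with
              | zero => exact Set.ncard_empty _
              | succ k' => exact ih (u + (d+1)) (by omega) u (d+1) k' rfl
          · split_ifs with h
            · exact ih (u + 1 + d) (by omega) (u+1) d k rfl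
            · exact Set.ncard_empty _
  intro u d k
  exact key (u + d) u d k rfl

lemma F_lt_eq_zero (u d k : ℕ) (h : u < d) : F u d k = 0 := by
  rw [← cnt_eq_F, S_empty_of_lt _ _ _ h, Set.ncard_empty]

lemma F_eq_zero : ∀ u d k : ℕ, d ≤ u → u < k + (if d < u then 1 else 0) → F u d k = 0 := by
  have key : ∀ N u d k : ℕ, u + d = N → d ≤ u → u < k + (if d < u then 1 else 0) →
      F u d k = 0 := by
    intro N
    induction N using Nat.strong_induction_on with
    | _ N ih =>
      intro u d k hN hdu hke
      cases u with
      | zero =>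
        interval_cases d
        simp only [lt_self_iff_false, if_false] at hke
        rw [F_zero_zero, if_neg (by omega)]
      | succ u =>
        cases d with
        | zero =>
          rw [if_pos (by omega)] at hke
          rw [F_succ_zero]
          split_ifs with hu
          · subst hu
            rw [F_zero_zero, if_neg (by omega)]
          · cases k with
            | zero => rfl
            | succ k' =>
              exact ih (u + 0) (by omega) u 0 k' rfl (by omega)
                (by rw [if_pos (by omega)]; omega)
        | succ d =>
          have hk : u < k := by split_ifs at hke <;> omega
          rw [F_succ_succ]
          have h2 : F (u+1) d k = 0 := by
            apply ih (u + 1 + d) (by omega) (u+1) d k rfl (by omega)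
            rw [if_pos (show d < u + 1 by omega)]; omega
          rw [h2, if_pos (show d + 1 ≤ u + 1 by omega), Nat.add_zero]
          split_ifs with hud
          · exact ih (u + (d+1)) (by omega) u (d+1) k rfl (by omega)
              (by rw [if_neg (show ¬ (d + 1 < u) by omega)]; omega)
          · cases k with
            | zero => rfl
            | succ k' =>
              rcases Nat.lt_or_ge u (d+1) with h3 | h3
              · exact F_lt_eq_zero u (d+1) k' h3
              · exact ih (u + (d+1)) (by omega) u (d+1) k' rfl (by omega)
                  (by rw [if_pos (show d + 1 < u by omega)]; omega)
  intro u d k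
  exact key (u + d) u d k rfl

lemma choose_dec (M r : ℕ) (h : M ≤ 2 * r + 1) : M.choose (r + 1) ≤ M.choose r := by
  rcases Nat.lt_or_ge M (r+1) with h1 | h1
  · rw [Nat.choose_eq_zero_of_lt h1]
    exact Nat.zero_le _
  · rcases eq_or_lt_of_le h with h2 | h2
    · apply le_of_eq
      have h3 : r ≤ M := by omega
      have := Nat.choose_symm h3
      have h4 : M - r = r + 1 := by omega
      rw [h4] at this
      exact this
    · have h3 : r ≤ M := by omega
      rw [← Nat.choose_symm h1, ← Nat.choose_symm h3]
      have h4 : M - r = (M - (r+1)) + 1 := by omega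
      rw [h4]
      exact Nat.choose_le_succ_of_lt_half_left (by omega)

lemma F_closed : ∀ N u d k : ℕ, (u + 1) + d = N → d ≤ u + 1 →
    k + (if d ≤ u then 1 else 0) ≤ u + 1 →
    F (u+1) d k = (d + k + (if d ≤ u then 1 else 0) - 1).choose u
      - (d + k + (if d ≤ u then 1 else 0) - 1).choose (u+1) := by
  intro N
  induction N using Nat.strong_induction_on with
  | _ N ih =>
    intro u d k hN hdu hke
    cases d with
    | zero =>
      rw [if_pos (Nat.zero_le u)] at hke ⊢
      have hM : 0 + k + 1 - 1 = k := by omega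
      rw [hM]
      cases u with
      | zero =>
        have hk0 : k = 0 := by omega
        subst hk0
        rw [F_succ_zero, if_pos rfl, F_zero_zero]
        simp
      | succ u' =>
        rw [F_succ_zero, if_neg (by omega)]
        cases k with
        | zero =>
          rw [Nat.choose_eq_zero_of_lt (by omega), Nat.choose_eq_zero_of_lt (by omega)]
        | succ k' =>
          have hT := ih (u' + 1 + 0) (by omega) u' 0 k' rfl (by omega)
            (by rw [if_pos (Nat.zero_le u')]; omega)
          rw [if_pos (Nat.zero_le u')] at hT
          have hM' : 0 + k' + 1 - 1 = k' := by omega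
          rw [hM'] at hT
          show F (u' + 1) 0 k' = _
          rw [hT]
          have p1 : (k'+1).choose (u'+1) = k'.choose u' + k'.choose (u'+1) :=
            Nat.choose_succ_succ k' u'
          have p2 : (k'+1).choose (u'+1+1) = k'.choose (u'+1) + k'.choose (u'+1+1) :=
            Nat.choose_succ_succ k' (u'+1)
          have z1 : k'.choose (u'+1) = 0 := Nat.choose_eq_zero_of_lt (by omega)
          have z2 : k'.choose (u'+1+1) = 0 := Nat.choose_eq_zero_of_lt (by omega)
          omega
    | succ d' =>
      rw [F_succ_succ, if_pos (show d' + 1 ≤ u + 1 by omega)]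
      rcases Nat.lt_or_ge d' u with hC | hB
      · -- d' + 1 ≤ u : e = 1
        rw [if_pos (show d' + 1 ≤ u by omega)] at hke ⊢
        have hFl := ih (u + 1 + d') (by omega) u d' k rfl (by omega)
          (by rw [if_pos (by omega)]; omega)
        rw [if_pos (by omega)] at hFl
        rcases eq_or_lt_of_le (show d' + 1 ≤ u by omega) with hA | hCC
        · -- u = d' + 1 : subcase A
          rw [if_pos hA.symm]
          have hT := ih (d' + 1 + (d' + 1)) (by omega) d' (d'+1) k rfl (by omega)
            (by rw [if_neg (by omega)]; omega)
          rw [if_neg (by omega)] at hT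
          rw [← hA] at hFl ⊢
          rw [hT, hFl]
          have e1 : d' + 1 + k + 0 - 1 = d' + k := by omega
          have e2 : d' + k + 1 - 1 = d' + k := by omega
          have e3 : d' + 1 + k + 1 - 1 = d' + k + 1 := by omega
          rw [e1, e2, e3]
          have p1 : (d'+k+1).choose (d'+1) = (d'+k).choose d' + (d'+k).choose (d'+1) :=
            Nat.choose_succ_succ _ _
          have p2 : (d'+k+1).choose (d'+1+1) = (d'+k).choose (d'+1) + (d'+k).choose (d'+1+1) :=
            Nat.choose_succ_succ _ _
          have m1 : (d'+k).choose (d'+1) ≤ (d'+k).choose d' := choose_dec _ _ (by omega)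
          have m2 : (d'+k).choose (d'+1+1) ≤ (d'+k).choose (d'+1) := choose_dec _ _ (by omega)
          omega
        · -- d' + 1 < u : subcase C
          rw [if_neg (by omega)]
          have e2 : d' + k + 1 - 1 = d' + k := by omega
          rw [e2] at hFl
          have e3 : d' + 1 + k + 1 - 1 = d' + k + 1 := by omega
          rw [e3]
          cases k with
          | zero =>
            show 0 + F (u + 1) d' 0 = _
            rw [hFl]
            have z1 : (d'+0).choose u = 0 := Nat.choose_eq_zero_of_lt (by omega)
            have z2 : (d'+0).choose (u+1) = 0 := Nat.choose_eq_zero_of_lt (by omega)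
            have z3 : (d'+0+1).choose u = 0 := Nat.choose_eq_zero_of_lt (by omega)
            have z4 : (d'+0+1).choose (u+1) = 0 := Nat.choose_eq_zero_of_lt (by omega)
            omega
          | succ k' =>
            obtain ⟨u'', rfl⟩ : ∃ u'', u = u'' + 1 := ⟨u - 1, by omega⟩
            have hT := ih (u'' + 1 + (d'+1)) (by omega) u'' (d'+1) k' rfl (by omega)
              (by rw [if_pos (by omega)]; omega)
            rw [if_pos (by omega)] at hT
            have e4 : d' + 1 + k' + 1 - 1 = d' + (k'+1) := by omega
            rw [e4] at hT
            show F (u'' + 1) (d' + 1) k' + F (u'' + 1 + 1) d' (k' + 1) = _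
            rw [hT, hFl]
            have p1 : (d'+(k'+1)+1).choose (u''+1) =
                (d'+(k'+1)).choose u'' + (d'+(k'+1)).choose (u''+1) :=
              Nat.choose_succ_succ _ _
            have p2 : (d'+(k'+1)+1).choose (u''+1+1) =
                (d'+(k'+1)).choose (u''+1) + (d'+(k'+1)).choose (u''+1+1) :=
              Nat.choose_succ_succ _ _
            have m1 : (d'+(k'+1)).choose (u''+1) ≤ (d'+(k'+1)).choose u'' :=
              choose_dec _ _ (by omega)
            have m2 : (d'+(k'+1)).choose (u''+1+1) ≤ (d'+(k'+1)).choose (u''+1) :=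
              choose_dec _ _ (by omega)
            omega
      · -- d' ≥ u, with d'+1 ≤ u+1 : d' = u, subcase B
        have hB' : d' = u := by omega
        subst hB'
        rw [if_neg (show ¬ (d' + 1 ≤ d') by omega)] at hke ⊢
        rw [if_neg (show ¬ (d' = d' + 1) by omega)]
        have hT0 : (match k with
            | 0 => 0
            | k'+1 => F d' (d'+1) k') = 0 := by
          cases k with
          | zero => rfl
          | succ k' => exact F_lt_eq_zero d' (d'+1) k' (by omega)
        rw [hT0, Nat.zero_add]
        have e1 : d' + 1 + k + 0 - 1 = d' + k := by omega
        rw [e1]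
        rcases eq_or_lt_of_le hke with hk1 | hk2
        · -- k = d' + 1
          have hk' : k = d' + 1 := by omega
          subst hk'
          rw [F_eq_zero (d'+1) d' (d'+1) (by omega) (by rw [if_pos (by omega)]; omega)]
          have hs : (d' + (d'+1)).choose (d'+1) = (d' + (d'+1)).choose d' := by
            have h5 := Nat.choose_symm (show d' ≤ d' + (d'+1) by omega)
            have e : d' + (d'+1) - d' = d' + 1 := by omega
            rw [e] at h5
            exact h5
          omega
        · -- k ≤ d'
          have hFl := ih (d' + 1 + d') (by omega) d' d' k rfl (by omega)
            (by rw [if_pos (by omega)]; omega)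
          rw [if_pos (by omega)] at hFl
          have e2 : d' + k + 1 - 1 = d' + k := by omega
          rw [e2] at hFl
          exact hFl
lemma catalanTriangle_eq (n k : ℕ) (hk : k ≤ n) :
    catalanTriangle n k = (n + k).choose n - (n + k).choose (n + 1) := by
  have hC' : (n + k).choose (n + 1) * (n + 1) = (n + k).choose n * k := by
    have := Nat.choose_succ_right_eq (n + k) n
    rwa [show n + k - n = k by omega] at this
  set A := (n + k).choose n with hA
  set B := (n + k).choose (n + 1) with hB
  have hd : (n + 1) * (A - B) = (n + 1) * A - (n + 1) * B := Nat.mul_sub _ _ _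
  have h2 : (n + 1) * B = k * A := by rw [Nat.mul_comm, hC', Nat.mul_comm]
  have h3 : (n + 1) * A - k * A = (n + 1 - k) * A := (Nat.sub_mul _ _ _).symm
  have h4 : (n - k + 1) = (n + 1 - k) := by omega
  unfold catalanTriangle
  rw [← hA, h4, ← h3, ← h2, ← hd, Nat.mul_div_cancel_left _ (by omega : 0 < n + 1)]

end CDW

/-- The number of Dyck words of semi-length `n+1` with exactly `k` up-steps not at ground
level equals `C_{n,k}`. -/
theorem card_dyckWords_upNotGround (n k : ℕ) (hk : k ≤ n) :
    Nat.card {w : List Bool // IsDyckWord (n + 1) w ∧ (upStepsNotAtGround w).card = k}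
      = catalanTriangle n k := by
  have hset : {w : List Bool | IsDyckWord (n + 1) w ∧ (upStepsNotAtGround w).card = k}
      = CDW.S (n + 1) (n + 1) k := by
    ext w
    simp only [Set.mem_setOf_eq, CDW.S, IsDyckWord]
    constructor
    · rintro ⟨⟨h0, h1, h2, h3⟩, h4⟩
      exact ⟨h1, h2, h3, h4⟩
    · rintro ⟨h1, h2, h3, h4⟩
      have := CDW.count_add_count w
      exact ⟨⟨by omega, h1, h2, h3⟩, h4⟩
  have hcard : Nat.card
      {w : List Bool // IsDyckWord (n + 1) w ∧ (upStepsNotAtGround w).card = k}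
      = ({w : List Bool | IsDyckWord (n + 1) w ∧ (upStepsNotAtGround w).card = k}).ncard :=
    Nat.card_coe_set_eq _
  rw [hcard, hset, CDW.cnt_eq_F]
  have hF := CDW.F_closed ((n + 1) + (n + 1)) n (n + 1) k rfl (by omega)
    (by rw [if_neg (show ¬ (n + 1 ≤ n) by omega)]; omega)
  rw [if_neg (show ¬ (n + 1 ≤ n) by omega)] at hF
  rw [hF, CDW.catalanTriangle_eq n k hk]
  congr 1 <;> congr 1 <;> omega
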